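/- For positive weights ω₁, ω₂ and distinct positive reals x₁ ≠ x₂, the weighted Lehmer mean L(p) = (ω₁x₁^p + ω₂x₂^p)/(ω₁x₁^(p-1) + ω₂x₂^(p-1)) has its unique inflection point at p* = 1 − log(ω₁/ω₂)/log(x₁/x₂), i.e. L''(p*) = 0 and L'' changes sign there. -/

import Mathlib

open Real

lemma lehmer_aux (c a k b : ℝ) (p : ℝ) :
    iteratedDeriv 2 (fun q : ℝ => c + a / (1 + Real.exp (k * q + b))) p
      = (a * (Real.exp (k * p + b) - 1)) *
        (k ^ 2 * Real.exp (k * p + b) / (1 + Real.exp (k * p + b)) ^ 3) := by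
  have hEp : ∀ x : ℝ, HasDerivAt (fun q : ℝ => Real.exp (k * q + b))
      (k * Real.exp (k * x + b)) x := by
    intro x
    have h1 : HasDerivAt (fun q : ℝ => k * q + b) k x := by
      simpa using ((hasDerivAt_id x).const_mul k).add_const b
    simpa [mul_comm] using h1.exp
  have hne : ∀ x : ℝ, (1 + Real.exp (k * x + b)) ≠ 0 := fun x => by positivity
  have hg1 : ∀ x : ℝ, HasDerivAt (fun q : ℝ => c + a / (1 + Real.exp (k * q + b)))
      (-(a * (k * Real.exp (k * x + b)) / (1 + Real.exp (k * x + b)) ^ 2)) x := by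
    intro x
    have h2 := ((((hEp x).const_add 1).inv (hne x)).const_mul a).const_add c
    have h3 : (fun q : ℝ => c + a / (1 + Real.exp (k * q + b)))
        = fun q : ℝ => c + a * (1 + Real.exp (k * q + b))⁻¹ := by
      funext q; rw [div_eq_mul_inv]
    rw [h3]
    convert h2 using 1
    exacts [rfl, rfl, rfl, by ring]
  have hD1 : deriv (fun q : ℝ => c + a / (1 + Real.exp (k * q + b)))
      = fun x : ℝ => -(a * (k * Real.exp (k * x + b)) / (1 + Real.exp (k * x + b)) ^ 2) :=
    funext fun x => (hg1 x).deriv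
  have hu : HasDerivAt (fun q : ℝ => a * (k * Real.exp (k * q + b)))
      (a * (k * (k * Real.exp (k * p + b)))) p := ((hEp p).const_mul k).const_mul a
  have hv : HasDerivAt (fun q : ℝ => (1 + Real.exp (k * q + b)) ^ 2)
      ((2 : ℕ) * (1 + Real.exp (k * p + b)) ^ 1 * (k * Real.exp (k * p + b))) p :=
    ((hEp p).const_add 1).pow 2
  have hq := (hu.div hv (pow_ne_zero 2 (hne p))).neg
  rw [show (2 : ℕ) = 1 + 1 from rfl, iteratedDeriv_succ, iteratedDeriv_one, hD1]
  rw [show deriv (fun x : ℝ => -(a * (k * Real.exp (k * x + b)) / (1 + Real.exp (k * x + b)) ^ 2)) p = _ from hq.deriv]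
  have h0 : (0:ℝ) < 1 + Real.exp (k * p + b) := by positivity
  field_simp
  ring

theorem weighted_lehmer_inflection (ω₁ ω₂ x₁ x₂ : ℝ)
    (hω₁ : 0 < ω₁) (hω₂ : 0 < ω₂) (hx₁ : 0 < x₁) (hx₂ : 0 < x₂) (hne : x₁ ≠ x₂) :
    iteratedDeriv 2
      (fun q : ℝ => (ω₁ * x₁ ^ q + ω₂ * x₂ ^ q) /
        (ω₁ * x₁ ^ (q - 1) + ω₂ * x₂ ^ (q - 1)))
      (1 - Real.log (ω₁ / ω₂) / Real.log (x₁ / x₂)) = 0 ∧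
    (∀ p : ℝ, p < 1 - Real.log (ω₁ / ω₂) / Real.log (x₁ / x₂) →
      0 < iteratedDeriv 2
        (fun q : ℝ => (ω₁ * x₁ ^ q + ω₂ * x₂ ^ q) /
          (ω₁ * x₁ ^ (q - 1) + ω₂ * x₂ ^ (q - 1))) p) ∧
    (∀ p : ℝ, 1 - Real.log (ω₁ / ω₂) / Real.log (x₁ / x₂) < p →
      iteratedDeriv 2
        (fun q : ℝ => (ω₁ * x₁ ^ q + ω₂ * x₂ ^ q) /
          (ω₁ * x₁ ^ (q - 1) + ω₂ * x₂ ^ (q - 1))) p < 0) := by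
  set k : ℝ := Real.log (x₁ / x₂) with hkdef
  set m : ℝ := Real.log (ω₁ / ω₂) with hmdef
  have hx12 : (0:ℝ) < x₁ / x₂ := div_pos hx₁ hx₂
  have hk0 : k ≠ 0 := by
    refine Real.log_ne_zero_of_pos_of_ne_one hx12 ?_
    intro h
    exact hne (by field_simp at h; linarith)
  set b : ℝ := m - k with hbdef
  -- rewrite the function
  have hfun : (fun q : ℝ => (ω₁ * x₁ ^ q + ω₂ * x₂ ^ q) /
        (ω₁ * x₁ ^ (q - 1) + ω₂ * x₂ ^ (q - 1)))
      = fun q : ℝ => x₁ + (x₂ - x₁) / (1 + Real.exp (k * q + b)) := by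
    funext p
    have hp1 : (0:ℝ) < x₁ ^ (p - 1) := Real.rpow_pos_of_pos hx₁ _
    have hp2 : (0:ℝ) < x₂ ^ (p - 1) := Real.rpow_pos_of_pos hx₂ _
    have hE : Real.exp (k * p + b) = (ω₁ * x₁ ^ (p - 1)) / (ω₂ * x₂ ^ (p - 1)) := by
      have h1 : k * p + b = k * (p - 1) + m := by rw [hbdef]; ring
      rw [h1, Real.exp_add, hkdef, hmdef,
        ← Real.rpow_def_of_pos hx12, Real.exp_log (div_pos hω₁ hω₂),
        Real.div_rpow hx₁.le hx₂.le]
      field_simp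
    have hX1 : x₁ ^ p = x₁ ^ (p - 1) * x₁ := by
      rw [← Real.rpow_add_one hx₁.ne' (p - 1), sub_add_cancel]
    have hX2 : x₂ ^ p = x₂ ^ (p - 1) * x₂ := by
      rw [← Real.rpow_add_one hx₂.ne' (p - 1), sub_add_cancel]
    rw [hE, hX1, hX2]
    have hden : (0:ℝ) < ω₁ * x₁ ^ (p - 1) + ω₂ * x₂ ^ (p - 1) := by positivity
    field_simp
    ring
  rw [hfun]
  have key : ∀ p : ℝ, iteratedDeriv 2
      (fun q : ℝ => x₁ + (x₂ - x₁) / (1 + Real.exp (k * q + b))) p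
      = ((x₂ - x₁) * (Real.exp (k * p + b) - 1)) *
        (k ^ 2 * Real.exp (k * p + b) / (1 + Real.exp (k * p + b)) ^ 3) :=
    fun p => lehmer_aux x₁ (x₂ - x₁) k b p
  have hk2 : (0:ℝ) < k ^ 2 := by positivity
  have hpos : ∀ p : ℝ, 0 < k ^ 2 * Real.exp (k * p + b) / (1 + Real.exp (k * p + b)) ^ 3 := by
    intro p; positivity
  have harg : ∀ p : ℝ, k * p + b = k * (p - (1 - m / k)) := by
    intro p; rw [hbdef]; field_simp; ring
  refine ⟨?_, ?_, ?_⟩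
  · rw [key]
    have : k * (1 - m / k) + b = 0 := by rw [harg]; ring
    rw [this, Real.exp_zero]
    ring
  · intro p hp
    rw [key]
    refine mul_pos ?_ (hpos p)
    rw [harg]
    rcases lt_or_gt_of_ne hne with h | h
    · have hkneg : k < 0 := Real.log_neg hx12 ((div_lt_one hx₂).mpr h)
      have : (0:ℝ) < k * (p - (1 - m / k)) := mul_pos_of_neg_of_neg hkneg (by linarith)
      have hE1 : 1 < Real.exp (k * (p - (1 - m / k))) := Real.one_lt_exp_iff.mpr this
      nlinarith
    · have hkpos : 0 < k := Real.log_pos ((one_lt_div hx₂).mpr h)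
      have : k * (p - (1 - m / k)) < 0 := mul_neg_of_pos_of_neg hkpos (by linarith)
      have hE1 : Real.exp (k * (p - (1 - m / k))) < 1 := Real.exp_lt_one_iff.mpr this
      nlinarith
  · intro p hp
    rw [key]
    refine mul_neg_of_neg_of_pos ?_ (hpos p)
    rw [harg]
    rcases lt_or_gt_of_ne hne with h | h
    · have hkneg : k < 0 := Real.log_neg hx12 ((div_lt_one hx₂).mpr h)
      have : k * (p - (1 - m / k)) < 0 := mul_neg_of_neg_of_pos hkneg (by linarith)
      have hE1 : Real.exp (k * (p - (1 - m / k))) < 1 := Real.exp_lt_one_iff.mpr this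
      nlinarith
    · have hkpos : 0 < k := Real.log_pos ((one_lt_div hx₂).mpr h)
      have : (0:ℝ) < k * (p - (1 - m / k)) := mul_pos hkpos (by linarith)
      have hE1 : 1 < Real.exp (k * (p - (1 - m / k))) := Real.one_lt_exp_iff.mpr this
      nlinarith
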